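/- Let A be a k×k matrix over R with det(A) ≠ 0. Then the set of associated primes of the R-module M_A = R^k/AR^k coincides with the set of associated primes of the cyclic R-module R/⟨det(A)⟩. -/

import Mathlib

noncomputable section

/-- The ring `R = ℤ[u₁^{±1},…,u_d^{±1}]`, realized as the group algebra of `ℤ^d` over `ℤ`. -/
abbrev LaurentR (d : ℕ) : Type := AddMonoidAlgebra ℤ (Fin d → ℤ)

/-- The submodule `A·R^k ⊆ R^k` generated by the columns of the `k × k` matrix `A`. -/
def colSpan {d k n : ℕ} (A : Matrix (Fin k) (Fin n) (LaurentR d)) :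
    Submodule (LaurentR d) (Fin k → LaurentR d) :=
  Submodule.span (LaurentR d) (Set.range fun j i => A i j)

/-- The module `M_A = R^k / A·R^k`. -/
abbrev MA {d k n : ℕ} (A : Matrix (Fin k) (Fin n) (LaurentR d)) : Type :=
  (Fin k → LaurentR d) ⧸ colSpan A

instance (d : ℕ) : IsDomain (LaurentR d) := NoZeroDivisors.to_isDomain _

open UniqueFactorizationMonoid in
theorem ufm_of_isLocalization {R S : Type*} [CommRing R] [IsDomain R]
    [UniqueFactorizationMonoid R] [CommRing S] [IsDomain S] [Algebra R S]
    (M : Submonoid R) (hM : M ≤ nonZeroDivisors R) [IsLocalization M S] :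
    UniqueFactorizationMonoid S := by
  classical
  have hinj : Function.Injective (algebraMap R S) := IsLocalization.injective S hM
  have hunit : ∀ m : M, IsUnit (algebraMap R S (m : R)) := IsLocalization.map_units S
  have hAssocMap : ∀ {a b : R}, Associated a b →
      Associated (algebraMap R S a) (algebraMap R S b) := by
    rintro a b ⟨u, rfl⟩
    exact ⟨Units.map (algebraMap R S : R →* S) u, by simp⟩
  have key : ∀ p : R, Prime p → IsUnit (algebraMap R S p) ∨ Prime (algebraMap R S p) := by
    intro p hp
    by_cases hu : IsUnit (algebraMap R S p)
    · exact Or.inl hu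
    right
    refine ⟨fun h0 => hp.ne_zero (hinj (h0.trans (map_zero _).symm)), hu, ?_⟩
    intro x y hxy
    obtain ⟨⟨a, m⟩, ha⟩ := IsLocalization.surj M x
    obtain ⟨⟨b, n⟩, hb⟩ := IsLocalization.surj M y
    simp only at ha hb
    obtain ⟨s, hs⟩ := hxy
    obtain ⟨t, ht⟩ : algebraMap R S p ∣ algebraMap R S (a * b) :=
      ⟨s * algebraMap R S (m : R) * algebraMap R S (n : R), by
        calc algebraMap R S (a*b) = algebraMap R S a * algebraMap R S b := map_mul _ _ _
          _ = (x * algebraMap R S (m:R)) * (y * algebraMap R S (n:R)) := by rw [ha, hb]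
          _ = (x * y) * (algebraMap R S (m:R) * algebraMap R S (n:R)) := by ring
          _ = (algebraMap R S p * s) * (algebraMap R S (m:R) * algebraMap R S (n:R)) := by rw [hs]
          _ = _ := by ring⟩
    obtain ⟨⟨c, u⟩, hc⟩ := IsLocalization.surj M t
    simp only at hc
    have heq : a * b * (u : R) = p * c := by
      apply hinj
      calc algebraMap R S (a * b * (u:R))
          = algebraMap R S (a*b) * algebraMap R S (u:R) := map_mul _ _ _
        _ = (algebraMap R S p * t) * algebraMap R S (u:R) := by rw [ht]
        _ = algebraMap R S p * (t * algebraMap R S (u:R)) := by ring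
        _ = algebraMap R S p * algebraMap R S c := by rw [hc]
        _ = algebraMap R S (p * c) := (map_mul _ _ _).symm
    have hpdvd : p ∣ a * (b * (u : R)) := ⟨c, by rw [← mul_assoc]; exact heq⟩
    rcases hp.2.2 _ _ hpdvd with h | h
    · left
      obtain ⟨e, he⟩ := h
      have : algebraMap R S p ∣ x * algebraMap R S (m : R) := by
        rw [ha, he, map_mul]; exact Dvd.intro _ rfl
      exact ((hunit m).dvd_mul_right).mp this
    rcases hp.2.2 _ _ h with h' | h'
    · right
      obtain ⟨e, he⟩ := h'
      have : algebraMap R S p ∣ y * algebraMap R S (n : R) := by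
        rw [hb, he, map_mul]; exact Dvd.intro _ rfl
      exact ((hunit n).dvd_mul_right).mp this
    · exact absurd (isUnit_of_dvd_unit (map_dvd (algebraMap R S) h') (hunit u)) hu
  apply UniqueFactorizationMonoid.of_exists_prime_factors
  intro z hz
  obtain ⟨⟨r, m⟩, hr⟩ := IsLocalization.surj M z
  simp only at hr
  have hm : IsUnit (algebraMap R S (m : R)) := hunit m
  have hr0 : r ≠ 0 := by
    rintro rfl
    rw [map_zero] at hr
    rcases mul_eq_zero.mp hr with h | h
    · exact hz h
    · exact hm.ne_zero h
  obtain ⟨f, hf, hassoc⟩ := exists_prime_factors r hr0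
  refine ⟨(f.map (algebraMap R S)).filter (fun x => ¬ IsUnit x), ?_, ?_⟩
  · intro b hb
    rw [Multiset.mem_filter, Multiset.mem_map] at hb
    obtain ⟨⟨p, hpf, rfl⟩, hbu⟩ := hb
    exact (key p (hf p hpf)).resolve_left hbu
  · have h1 : Associated ((f.map (algebraMap R S)).prod) z := by
      have : (f.map (algebraMap R S)).prod = algebraMap R S f.prod := by
        rw [← map_multiset_prod]
      rw [this]
      have h2 : Associated (algebraMap R S f.prod) (algebraMap R S r) := hAssocMap hassoc
      have h3 : Associated (algebraMap R S r) z := by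
        refine Associated.symm ⟨hm.unit, ?_⟩
        rw [IsUnit.unit_spec]; exact hr
      exact h2.trans h3
    have hsplit : (f.map (algebraMap R S)) =
        (f.map (algebraMap R S)).filter (fun x => ¬ IsUnit x) +
        (f.map (algebraMap R S)).filter (fun x => IsUnit x) := by
      rw [add_comm, Multiset.filter_add_not]
    have hup : IsUnit (((f.map (algebraMap R S)).filter (fun x => IsUnit x)).prod) := by
      refine Multiset.prod_induction _ _ (fun a b ha hb => ha.mul hb) isUnit_one ?_
      intro a ha; exact (Multiset.mem_filter.mp ha).2
    refine Associated.trans ?_ h1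
    conv_rhs => rw [hsplit]
    rw [Multiset.prod_add]
    exact ⟨hup.unit, by rw [IsUnit.unit_spec]⟩


def inclHom (d : ℕ) : (Fin d →₀ ℕ) →+ (Fin d → ℤ) where
  toFun f := fun i => (f i : ℤ)
  map_zero' := by ext i; simp
  map_add' f g := by ext i; simp

theorem inclHom_injective (d : ℕ) : Function.Injective (inclHom d) := by
  intro f g h
  ext i
  have := congrFun h i
  simpa [inclHom] using this

def laurentMap (d : ℕ) : MvPolynomial (Fin d) ℤ →+* LaurentR d :=
  AddMonoidAlgebra.mapDomainRingHom ℤ (inclHom d)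

theorem laurentMap_apply (d : ℕ) (x : MvPolynomial (Fin d) ℤ) :
    laurentMap d x = AddMonoidAlgebra.mapDomain (inclHom d) x := rfl

theorem laurentMap_injective (d : ℕ) : Function.Injective (laurentMap d) := by
  intro x y h
  exact AddMonoidAlgebra.mapDomain_injective (inclHom_injective d) h

def mvMonomials (d : ℕ) : Submonoid (MvPolynomial (Fin d) ℤ) where
  carrier := Set.range fun α : Fin d →₀ ℕ => (MvPolynomial.monomial α (1:ℤ))
  one_mem' := ⟨0, by simp⟩
  mul_mem' := by
    rintro _ _ ⟨α, rfl⟩ ⟨β, rfl⟩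
    exact ⟨α + β, by simp [MvPolynomial.monomial_mul]⟩

theorem laurentMap_monomial (d : ℕ) (α : Fin d →₀ ℕ) :
    laurentMap d (MvPolynomial.monomial α (1:ℤ))
      = AddMonoidAlgebra.single (inclHom d α) 1 := by
  rw [← MvPolynomial.single_eq_monomial, laurentMap_apply]
  exact AddMonoidAlgebra.mapDomain_single

theorem single_isUnit (d : ℕ) (g : Fin d → ℤ) :
    IsUnit (AddMonoidAlgebra.single g (1:ℤ) : LaurentR d) := by
  refine ⟨⟨AddMonoidAlgebra.single g 1, (AddMonoidAlgebra.single (-g) 1 : LaurentR d), ?_, ?_⟩, rfl⟩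
  · rw [AddMonoidAlgebra.single_mul_single, add_neg_cancel, mul_one, AddMonoidAlgebra.one_def]
  · rw [AddMonoidAlgebra.single_mul_single, neg_add_cancel, mul_one, AddMonoidAlgebra.one_def]

instance laurentAlgebra (d : ℕ) : Algebra (MvPolynomial (Fin d) ℤ) (LaurentR d) :=
  (laurentMap d).toAlgebra

theorem laurent_algebraMap (d : ℕ) :
    algebraMap (MvPolynomial (Fin d) ℤ) (LaurentR d) = laurentMap d := rfl

theorem laurent_isLocalization (d : ℕ) : IsLocalization (mvMonomials d) (LaurentR d) where
  map_units := by
    rintro ⟨_, α, rfl⟩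
    rw [laurent_algebraMap, laurentMap_monomial]
    exact single_isUnit d _
  surj := by
    classical
    intro z
    set N : Fin d → ℕ := fun i => z.coeff.support.sup fun v => (-(v i)).toNat with hN
    set α : Fin d →₀ ℕ := Finsupp.equivFunOnFinite.symm N with hα
    have hαi : ∀ i, (α i : ℤ) = (N i : ℤ) := by intro i; rw [hα]; simp
    set w : LaurentR d := z * AddMonoidAlgebra.single (inclHom d α) 1 with hw
    have hsup : ∀ v ∈ w.coeff.support, ∀ i, 0 ≤ v i := by
      intro v hv i
      have hv' : w.coeff v ≠ 0 := Finsupp.mem_support_iff.mp hv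
      rw [hw, AddMonoidAlgebra.coeff_mul_single_apply, mul_one] at hv'
      have hmem : v - inclHom d α ∈ z.coeff.support := Finsupp.mem_support_iff.mpr hv'
      have h1 : (-((v - inclHom d α) i)).toNat ≤ N i :=
        Finset.le_sup (f := fun v => (-(v i)).toNat) hmem
      have h2 : ((v - inclHom d α) i) = v i - (N i : ℤ) := by
        simp [inclHom, hαi i]
      have h3 : -(v i - (N i : ℤ)) ≤ ((-(v i - (N i : ℤ))).toNat : ℤ) := Int.self_le_toNat _
      have h4 : (((-((v - inclHom d α) i)).toNat : ℕ) : ℤ) ≤ (N i : ℤ) := by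
        exact_mod_cast h1
      rw [h2] at h4
      omega
    have hrange : ↑w.coeff.support ⊆ Set.range (inclHom d) := by
      intro v hv
      refine ⟨Finsupp.equivFunOnFinite.symm (fun i => (v i).toNat), ?_⟩
      ext i
      have : ((Finsupp.equivFunOnFinite.symm (fun i => (v i).toNat)) i : ℤ) = ((v i).toNat : ℤ) := by
        simp
      show ((Finsupp.equivFunOnFinite.symm (fun i => (v i).toNat)) i : ℤ) = v i
      rw [this, Int.toNat_of_nonneg (hsup v hv i)]
    refine ⟨⟨AddMonoidAlgebra.comapDomain (inclHom d) (inclHom_injective d) w,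
        ⟨MvPolynomial.monomial α 1, ⟨α, rfl⟩⟩⟩, ?_⟩
    have hmap : AddMonoidAlgebra.mapDomain (inclHom d) (AddMonoidAlgebra.comapDomain (inclHom d)
        (inclHom_injective d) w) = w :=
      AddMonoidAlgebra.mapDomain_comapDomain hrange (inclHom_injective d)
    show z * algebraMap (MvPolynomial (Fin d) ℤ) (LaurentR d) (MvPolynomial.monomial α 1) = _
    rw [laurent_algebraMap, laurentMap_monomial, laurentMap_apply, hmap]
  exists_of_eq := by
    intro x y h
    exact ⟨1, by rw [laurentMap_injective d h]⟩

instance laurentUFD (d : ℕ) : UniqueFactorizationMonoid (LaurentR d) := by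
  haveI := laurent_isLocalization d
  refine ufm_of_isLocalization (R := MvPolynomial (Fin d) ℤ) (mvMonomials d) ?_
  rintro _ ⟨α, rfl⟩
  refine mem_nonZeroDivisors_of_ne_zero ?_
  simp [MvPolynomial.monomial_eq_zero]

namespace AssocPrimesAux

variable {d k : ℕ} (A : Matrix (Fin k) (Fin k) (LaurentR d))

theorem colSpan_eq_range : colSpan A = LinearMap.range A.mulVecLin := by
  rw [Matrix.range_mulVecLin]
  rfl

theorem mem_colSpan_iff (v : Fin k → LaurentR d) :
    v ∈ colSpan A ↔ ∃ x, A.mulVec x = v := by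
  rw [colSpan_eq_range]
  constructor
  · rintro ⟨x, rfl⟩; exact ⟨x, rfl⟩
  · rintro ⟨x, rfl⟩; exact ⟨x, rfl⟩

theorem adj_A_mulVec (v : Fin k → LaurentR d) :
    (A.adjugate).mulVec (A.mulVec v) = A.det • v := by
  rw [Matrix.mulVec_mulVec, Matrix.adjugate_mul, Matrix.smul_mulVec, Matrix.one_mulVec]

theorem A_adj_mulVec (v : Fin k → LaurentR d) :
    A.mulVec ((A.adjugate).mulVec v) = A.det • v := by
  rw [Matrix.mulVec_mulVec, Matrix.mul_adjugate, Matrix.smul_mulVec, Matrix.one_mulVec]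

theorem smul_mem_colSpan_iff (hA : A.det ≠ 0) (m : Fin k → LaurentR d) (r : LaurentR d) :
    r • m ∈ colSpan A ↔ ∀ i, A.det ∣ r * (A.adjugate).mulVec m i := by
  rw [mem_colSpan_iff]
  constructor
  · rintro ⟨x, hx⟩ i
    refine ⟨x i, ?_⟩
    have : r • ((A.adjugate).mulVec m) = A.det • x := by
      rw [← Matrix.mulVec_smul, ← hx, adj_A_mulVec]
    have := congrFun this i
    simpa using this
  · intro hdvd
    choose z hz using hdvd
    refine ⟨z, ?_⟩
    have h1 : A.det • (A.mulVec z) = A.det • (r • m) := by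
      have hzy : A.det • z = r • ((A.adjugate).mulVec m) := by
        funext i
        have := hz i
        simpa using this.symm
      rw [← Matrix.mulVec_smul, hzy, Matrix.mulVec_smul, A_adj_mulVec, smul_comm]
    funext i
    have := congrFun h1 i
    simp only [Pi.smul_apply, smul_eq_mul] at this
    exact mul_left_cancel₀ hA this

end AssocPrimesAux


open AssocPrimesAux in
theorem associated_primes_of_MA_eq_associated_primes_of_det (d k : ℕ)
    (A : Matrix (Fin k) (Fin k) (LaurentR d)) (hA : A.det ≠ 0) :
    associatedPrimes (LaurentR d) (MA A)
      = associatedPrimes (LaurentR d)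
          (LaurentR d ⧸ Ideal.span ({A.det} : Set (LaurentR d))) := by
  classical
  ext P
  haveI := laurent_isLocalization d
  haveI : IsNoetherianRing (LaurentR d) :=
    IsLocalization.isNoetherianRing (mvMonomials d) (LaurentR d) inferInstance
  simp only [AssociatedPrimes.mem_iff, isAssociatedPrime_iff, Submodule.bot_colon']
  constructor
  · rintro ⟨hP, x, hx⟩
    obtain ⟨m, rfl⟩ := Submodule.Quotient.mk_surjective _ x
    set y := (A.adjugate).mulVec m with hy
    have hPmem : ∀ r, r ∈ P ↔ ∀ i, A.det ∣ r * y i := by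
      intro r
      rw [hx, Submodule.mem_annihilator_span_singleton, ← Submodule.Quotient.mk_smul,
        Submodule.Quotient.mk_eq_zero]
      exact smul_mem_colSpan_iff A hA m r
    set J : Fin k → Ideal (LaurentR d) := fun i =>
      (Submodule.span (LaurentR d) {(Submodule.Quotient.mk (y i) :
          LaurentR d ⧸ Ideal.span ({A.det} : Set (LaurentR d)))}).annihilator with hJ
    have hJmem : ∀ (i : Fin k) (r : LaurentR d), r ∈ J i ↔ A.det ∣ r * y i := by
      intro i r
      rw [hJ]
      rw [Submodule.mem_annihilator_span_singleton, ← Submodule.Quotient.mk_smul,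
        Submodule.Quotient.mk_eq_zero, Ideal.mem_span_singleton, smul_eq_mul]
    have hPJ : P = Finset.univ.inf J := by
      ext r
      rw [Submodule.mem_finsetInf, hPmem r]
      constructor
      · intro hall i _; exact (hJmem i r).mpr (hall i)
      · intro hall i; exact (hJmem i r).mp (hall i (Finset.mem_univ i))
    obtain ⟨i, -, hi⟩ := (hP.inf_le').mp (le_of_eq hPJ.symm)
    have hPi : P = J i := le_antisymm (le_of_eq hPJ |>.trans (Finset.inf_le (Finset.mem_univ i))) hi
    exact ⟨hP, Submodule.Quotient.mk (y i), hPi⟩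
  · rintro ⟨hP, x, hx⟩
    obtain ⟨g, rfl⟩ := Submodule.Quotient.mk_surjective _ x
    have hPmem : ∀ r, r ∈ P ↔ A.det ∣ r * g := by
      intro r
      rw [hx, Submodule.mem_annihilator_span_singleton, ← Submodule.Quotient.mk_smul,
        Submodule.Quotient.mk_eq_zero, Ideal.mem_span_singleton, smul_eq_mul]
    obtain ⟨h, g₁, c, hrel, hch, hcg⟩ :=
      UniqueFactorizationMonoid.exists_reduced_factors A.det hA g
    have hc0 : c ≠ 0 := fun h0 => hA (by rw [← hch, h0, zero_mul])
    have hh0 : h ≠ 0 := fun h0 => hA (by rw [← hch, h0, mul_zero])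
    have hPh : P = Ideal.span {h} := by
      ext r
      rw [hPmem r, Ideal.mem_span_singleton]
      constructor
      · intro hd
        have h2 : c * h ∣ c * (r * g₁) := by
          rw [hch]
          have : r * g = c * (r * g₁) := by rw [← hcg]; ring
          rwa [this] at hd
        exact hrel.dvd_of_dvd_mul_right ((mul_dvd_mul_iff_left hc0).mp h2)
      · rintro ⟨e, rfl⟩
        refine ⟨e * g₁, ?_⟩
        rw [← hch, ← hcg]; ring
    have hprime : Prime h := (Ideal.span_singleton_prime hh0).mp (hPh ▸ hP)
    haveI hspanprime : (Ideal.span ({h} : Set (LaurentR d))).IsPrime := hPh ▸ hP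
    set q := Ideal.Quotient.mk (Ideal.span ({h} : Set (LaurentR d))) with hq
    have hdet0 : (A.map q).det = 0 := by
      rw [← RingHom.mapMatrix_apply, ← RingHom.map_det, Ideal.Quotient.eq_zero_iff_mem,
        Ideal.mem_span_singleton]
      exact ⟨c, by rw [← hch]; ring⟩
    obtain ⟨v, hv0, hv⟩ := Matrix.exists_mulVec_eq_zero_iff.mpr hdet0
    choose z hz using fun i => Ideal.Quotient.mk_surjective (v i)
    have hqz : q ∘ z = v := funext hz
    have hAz : ∀ i, h ∣ (A.mulVec z) i := by
      intro i
      rw [← Ideal.mem_span_singleton, ← Ideal.Quotient.eq_zero_iff_mem]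
      show q ((A.mulVec z) i) = 0
      rw [RingHom.map_mulVec q A z i, hqz, hv]
      rfl
    choose w hw using hAz
    have hzi : ∃ i, ¬ h ∣ z i := by
      by_contra hcon
      push_neg at hcon
      apply hv0
      funext i
      rw [← hz i]
      simp only [Pi.zero_apply]
      rw [Ideal.Quotient.eq_zero_iff_mem, Ideal.mem_span_singleton]
      exact hcon i
    obtain ⟨i₀, hi₀⟩ := hzi
    have hBw : (A.adjugate).mulVec w = c • z := by
      have h1 : h • ((A.adjugate).mulVec w) = h • (c • z) := by
        have hhw : h • w = A.mulVec z := by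
          funext i
          simp only [Pi.smul_apply, smul_eq_mul]
          exact (hw i).symm
        calc h • ((A.adjugate).mulVec w) = (A.adjugate).mulVec (h • w) :=
              (Matrix.mulVec_smul _ _ _).symm
          _ = (A.adjugate).mulVec (A.mulVec z) := by rw [hhw]
          _ = A.det • z := adj_A_mulVec A z
          _ = (c * h) • z := by rw [hch]
          _ = h • (c • z) := by rw [mul_comm, mul_smul]
      funext i
      have := congrFun h1 i
      simp only [Pi.smul_apply, smul_eq_mul] at this
      exact mul_left_cancel₀ hh0 this
    refine ⟨hP, Submodule.Quotient.mk w, ?_⟩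
    ext r
    rw [Submodule.mem_annihilator_span_singleton, ← Submodule.Quotient.mk_smul,
      Submodule.Quotient.mk_eq_zero, smul_mem_colSpan_iff A hA w r, hPh,
      Ideal.mem_span_singleton, hBw]
    constructor
    · rintro ⟨e, rfl⟩ i
      refine ⟨e * z i, ?_⟩
      simp only [Pi.smul_apply, smul_eq_mul]
      rw [← hch]; ring
    · intro hd
      have h3 := hd i₀
      simp only [Pi.smul_apply, smul_eq_mul] at h3
      have h4 : h ∣ r * z i₀ := by
        have h5 : c * h ∣ c * (r * z i₀) := by
          rw [hch]
          have : r * (c * z i₀) = c * (r * z i₀) := by ring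
          rwa [this] at h3
        exact (mul_dvd_mul_iff_left hc0).mp h5
      rcases hprime.2.2 _ _ h4 with h6 | h6
      · exact h6
      · exact absurd h6 hi₀
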